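/- Let A, C ∈ ℝ^{n×n}, B, D ∈ ℝ^{n×m}, let Q ∈ ℝ^{n×n} and R ∈ ℝ^{m×m} be symmetric positive definite, and let γ ∈ [0,1). Let (L_i)_{i≥0} and symmetric positive definite (P_i)_{i≥0} satisfy the policy-iteration recursion: P_i = γ(A+BL_i)ᵀP_i(A+BL_i) + γ(C+DL_i)ᵀP_i(C+DL_i) + L_iᵀRL_i + Q and L_{i+1} = −(R + γBᵀP_iB + γDᵀP_iD)⁻¹(γBᵀP_iA + γDᵀP_iC) for all i. Suppose P* is a symmetric positive definite solution of the stochastic algebraic Riccati equation P* = Q + γAᵀP*A + γCᵀP*C − (γAᵀP*B + γCᵀP*D)(R + γBᵀP*B + γDᵀP*D)⁻¹(γBᵀP*A + γDᵀP*C). Then P* ≤ P_i for every i, i.e. P_i − P* is positive semidefinite. -/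

import Mathlib

open Matrix

set_option maxHeartbeats 1000000

section Aux

lemma smulPSD {k : ℕ} {M : Matrix (Fin k) (Fin k) ℝ} {γ : ℝ} (hγ : 0 ≤ γ)
    (h : M.PosSemidef) : (γ • M).PosSemidef := by
  refine .of_dotProduct_mulVec_nonneg ?_ fun x => ?_
  · show (γ • M)ᴴ = γ • M
    rw [conjTranspose_smul, star_trivial, h.1]
  · rw [smul_mulVec, dotProduct_smul]
    exact mul_nonneg hγ (h.dotProduct_mulVec_nonneg x)

lemma transPSD {n m : ℕ} {X : Matrix (Fin n) (Fin n) ℝ} (hX : X.PosSemidef)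
    (B : Matrix (Fin n) (Fin m) ℝ) : (Bᵀ * X * B).PosSemidef := by
  have := hX.conjTranspose_mul_mul_same B
  rwa [Matrix.conjTranspose_eq_transpose_of_trivial] at this

lemma psdSum {k : ℕ} (s : Finset ℕ) (f : ℕ → Matrix (Fin k) (Fin k) ℝ)
    (h : ∀ j ∈ s, (f j).PosSemidef) : (∑ j ∈ s, f j).PosSemidef :=
  Finset.sum_induction f _ (fun _ _ ha hb => ha.add hb) Matrix.PosSemidef.zero h

lemma quad_bound {n : ℕ} (H : Matrix (Fin n) (Fin n) ℝ) (z : Fin n → ℝ) :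
    z ⬝ᵥ H *ᵥ z ≤ (∑ i, ∑ j, |H i j|) * (z ⬝ᵥ z) := by
  have hzz : ∀ k, z k ^ 2 ≤ z ⬝ᵥ z := by
    intro k
    have : z ⬝ᵥ z = ∑ i, z i ^ 2 := by simp [dotProduct, sq]
    rw [this]
    exact Finset.single_le_sum (fun i _ => sq_nonneg (z i)) (Finset.mem_univ k)
  calc z ⬝ᵥ H *ᵥ z = ∑ i, ∑ j, z i * (H i j * z j) := by
        simp [dotProduct, mulVec, Finset.mul_sum]
    _ ≤ ∑ i, ∑ j, |H i j| * (z ⬝ᵥ z) := by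
        refine Finset.sum_le_sum fun i _ => Finset.sum_le_sum fun j _ => ?_
        have h1 : z i * (H i j * z j) ≤ |z i * (H i j * z j)| := le_abs_self _
        have h2 : |z i * (H i j * z j)| = |H i j| * (|z i| * |z j|) := by
          rw [abs_mul, abs_mul]; ring
        have h3 : |z i| * |z j| ≤ z ⬝ᵥ z := by
          have h4 : |z i| ^2 + |z j|^2 ≤ 2 * (z ⬝ᵥ z) := by
            rw [sq_abs, sq_abs]; linarith [hzz i, hzz j]
          nlinarith [abs_nonneg (z i), abs_nonneg (z j), two_mul_le_add_sq (|z i|) (|z j|)]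
        calc z i * (H i j * z j) ≤ |H i j| * (|z i| * |z j|) := by rw [← h2]; exact h1
          _ ≤ |H i j| * (z ⬝ᵥ z) := mul_le_mul_of_nonneg_left h3 (abs_nonneg _)
    _ = (∑ i, ∑ j, |H i j|) * (z ⬝ᵥ z) := by
        rw [Finset.sum_mul]; congr 1; ext i; rw [Finset.sum_mul]

open scoped MatrixOrder in
lemma dominate {n : ℕ} (Q P : Matrix (Fin n) (Fin n) ℝ) (hQ : Q.PosDef) (hP : P.PosSemidef) :
    ∃ c : ℝ, 0 ≤ c ∧ ∀ y : Fin n → ℝ, y ⬝ᵥ P *ᵥ y ≤ c * (y ⬝ᵥ Q *ᵥ y) := by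
  set G := CFC.sqrt Q with hGdef
  have hGG : G * G = Q := CFC.sqrt_mul_sqrt_self Q hQ.posSemidef.nonneg
  have hGt : Gᵀ = G := by
    rw [← Matrix.conjTranspose_eq_transpose_of_trivial]
    exact (CFC.sqrt_nonneg Q).posSemidef.1
  have hdet : IsUnit G.det := by
    have h1 : IsUnit Q.det := (Matrix.isUnit_iff_isUnit_det Q).mp hQ.isUnit
    rw [← hGG, Matrix.det_mul] at h1
    exact isUnit_of_mul_isUnit_left h1
  have h1 : G * G⁻¹ = 1 := Matrix.mul_nonsing_inv G hdet
  have h2 : G⁻¹ * G = 1 := Matrix.nonsing_inv_mul G hdet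
  set H := G⁻¹ * P * G⁻¹ with hH
  refine ⟨∑ i, ∑ j, |H i j|,
    Finset.sum_nonneg fun i _ => Finset.sum_nonneg fun j _ => abs_nonneg _, fun y => ?_⟩
  have key : G * H * G = P := by
    rw [hH]
    calc G * (G⁻¹ * P * G⁻¹) * G = (G * G⁻¹) * P * (G⁻¹ * G) := by
          simp only [Matrix.mul_assoc]
      _ = P := by rw [h1, h2, Matrix.one_mul, Matrix.mul_one]
  have hquad : ∀ (N : Matrix (Fin n) (Fin n) ℝ) (y : Fin n → ℝ),
      y ⬝ᵥ (Gᵀ * N * G) *ᵥ y = (G *ᵥ y) ⬝ᵥ N *ᵥ (G *ᵥ y) := by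
    intro N y
    rw [← Matrix.mulVec_mulVec, ← Matrix.mulVec_mulVec, Matrix.dotProduct_mulVec,
      Matrix.vecMul_transpose]
  have e1 : y ⬝ᵥ P *ᵥ y = (G *ᵥ y) ⬝ᵥ H *ᵥ (G *ᵥ y) := by
    rw [← hquad H y, hGt, key]
  have e2 : y ⬝ᵥ Q *ᵥ y = (G *ᵥ y) ⬝ᵥ (G *ᵥ y) := by
    have h3 : (G *ᵥ y) ⬝ᵥ (1 : Matrix (Fin n) (Fin n) ℝ) *ᵥ (G *ᵥ y)
        = (G *ᵥ y) ⬝ᵥ (G *ᵥ y) := by rw [Matrix.one_mulVec]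
    rw [← h3, ← hquad 1 y, hGt, Matrix.mul_one, hGG]
  rw [e1, e2]
  exact quad_bound H (G *ᵥ y)

lemma eqS {n m : ℕ} (A C Pstar Q : Matrix (Fin n) (Fin n) ℝ)
    (B D : Matrix (Fin n) (Fin m) ℝ) (R S : Matrix (Fin m) (Fin m) ℝ)
    (Li : Matrix (Fin m) (Fin n) ℝ) (γ : ℝ)
    (hS : S = R + γ•(Bᵀ*Pstar*B) + γ•(Dᵀ*Pstar*D))
    (hsare : Pstar = Q + γ•(Aᵀ*Pstar*A) + γ•(Cᵀ*Pstar*C) -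
      (γ•(Aᵀ*Pstar*B)+γ•(Cᵀ*Pstar*D)) * S⁻¹ * (γ•(Bᵀ*Pstar*A)+γ•(Dᵀ*Pstar*C))) :
    Pstar = γ•((A+B*Li)ᵀ*Pstar*(A+B*Li)) + γ•((C+D*Li)ᵀ*Pstar*(C+D*Li)) + (Liᵀ*R*Li + Q)
      - (Liᵀ*S*Li + Liᵀ*(γ•(Bᵀ*Pstar*A)+γ•(Dᵀ*Pstar*C))
         + (γ•(Aᵀ*Pstar*B)+γ•(Cᵀ*Pstar*D))*Li
         + (γ•(Aᵀ*Pstar*B)+γ•(Cᵀ*Pstar*D)) * S⁻¹ * (γ•(Bᵀ*Pstar*A)+γ•(Dᵀ*Pstar*C))) := by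
  nth_rewrite 1 [hsare]
  rw [hS]
  simp only [transpose_add, transpose_mul, transpose_smul, transpose_transpose,
    Matrix.mul_add, Matrix.add_mul, smul_add,
    Matrix.smul_mul, Matrix.mul_smul, Matrix.mul_assoc]
  abel

lemma sqexp {m n : ℕ} (S : Matrix (Fin m) (Fin m) ℝ) (K Li : Matrix (Fin m) (Fin n) ℝ)
    (hSinvT : (S⁻¹)ᵀ = S⁻¹) (h1 : S*S⁻¹ = 1) (h2 : S⁻¹*S = 1) :
    (Li + S⁻¹*K)ᵀ*S*(Li + S⁻¹*K) = Liᵀ*S*Li + Liᵀ*K + Kᵀ*Li + Kᵀ*S⁻¹*K := by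
  have e1 : S * (S⁻¹ * K) = K := by rw [← Matrix.mul_assoc, h1, Matrix.one_mul]
  have e2 : S⁻¹ * (S * Li) = Li := by rw [← Matrix.mul_assoc, h2, Matrix.one_mul]
  rw [Matrix.mul_assoc]
  simp only [transpose_add, transpose_mul, hSinvT, Matrix.mul_add, Matrix.add_mul, e1]
  rw [Matrix.mul_assoc Kᵀ S⁻¹ (S*Li), e2]
  simp only [Matrix.mul_assoc]
  abel

lemma delta_eq {n m : ℕ} (A C Pstar Pi Q : Matrix (Fin n) (Fin n) ℝ)
    (B D : Matrix (Fin n) (Fin m) ℝ) (R S : Matrix (Fin m) (Fin m) ℝ)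
    (Li : Matrix (Fin m) (Fin n) ℝ) (γ : ℝ)
    (hPt : Pstarᵀ = Pstar)
    (hS : S = R + γ•(Bᵀ*Pstar*B) + γ•(Dᵀ*Pstar*D))
    (hSinvT : (S⁻¹)ᵀ = S⁻¹) (h1 : S*S⁻¹ = 1) (h2 : S⁻¹*S = 1)
    (hsle : Pi = γ•((A+B*Li)ᵀ*Pi*(A+B*Li)) + γ•((C+D*Li)ᵀ*Pi*(C+D*Li)) + Liᵀ*R*Li + Q)
    (hsare : Pstar = Q + γ•(Aᵀ*Pstar*A) + γ•(Cᵀ*Pstar*C) -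
      (γ•(Aᵀ*Pstar*B)+γ•(Cᵀ*Pstar*D)) * S⁻¹ * (γ•(Bᵀ*Pstar*A)+γ•(Dᵀ*Pstar*C))) :
    Pi - Pstar = γ•((A+B*Li)ᵀ*(Pi-Pstar)*(A+B*Li)) + γ•((C+D*Li)ᵀ*(Pi-Pstar)*(C+D*Li))
      + (Li + S⁻¹*(γ•(Bᵀ*Pstar*A)+γ•(Dᵀ*Pstar*C)))ᵀ*S*
          (Li + S⁻¹*(γ•(Bᵀ*Pstar*A)+γ•(Dᵀ*Pstar*C))) := by
  have hKt : (γ•(Bᵀ*Pstar*A)+γ•(Dᵀ*Pstar*C))ᵀ = γ•(Aᵀ*Pstar*B)+γ•(Cᵀ*Pstar*D) := by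
    simp [transpose_add, transpose_smul, transpose_mul, hPt, Matrix.mul_assoc]
  rw [sqexp S _ Li hSinvT h1 h2, hKt]
  conv_lhs => rw [hsle, eqS A C Pstar Q B D R S Li γ hS hsare]
  simp only [Matrix.mul_sub, Matrix.sub_mul, smul_sub]
  abel

end Aux

theorem stmt12 {n m : ℕ} (A C : Matrix (Fin n) (Fin n) ℝ)
    (B D : Matrix (Fin n) (Fin m) ℝ)
    (Q : Matrix (Fin n) (Fin n) ℝ) (R : Matrix (Fin m) (Fin m) ℝ) (γ : ℝ)
    (hQ : Q.PosDef) (hR : R.PosDef) (hγ0 : 0 ≤ γ) (hγ1 : γ < 1)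
    (L : ℕ → Matrix (Fin m) (Fin n) ℝ) (P : ℕ → Matrix (Fin n) (Fin n) ℝ)
    (hPpd : ∀ i, (P i).PosDef)
    (hsle : ∀ i, P i = γ • ((A + B * L i)ᵀ * P i * (A + B * L i)) +
      γ • ((C + D * L i)ᵀ * P i * (C + D * L i)) + (L i)ᵀ * R * (L i) + Q)
    (hupd : ∀ i, L (i + 1) = -((R + γ • (Bᵀ * P i * B) + γ • (Dᵀ * P i * D))⁻¹ *
      (γ • (Bᵀ * P i * A) + γ • (Dᵀ * P i * C))))
    (Pstar : Matrix (Fin n) (Fin n) ℝ) (hPstar : Pstar.PosDef)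
    (hsare : Pstar = Q + γ • (Aᵀ * Pstar * A) + γ • (Cᵀ * Pstar * C) -
      (γ • (Aᵀ * Pstar * B) + γ • (Cᵀ * Pstar * D)) *
        (R + γ • (Bᵀ * Pstar * B) + γ • (Dᵀ * Pstar * D))⁻¹ *
        (γ • (Bᵀ * Pstar * A) + γ • (Dᵀ * Pstar * C))) :
    ∀ i, (P i - Pstar).PosSemidef := by
  intro i
  have hPstT : Pstarᵀ = Pstar := by
    rw [← Matrix.conjTranspose_eq_transpose_of_trivial]; exact hPstar.1
  set S : Matrix (Fin m) (Fin m) ℝ :=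
    R + γ • (Bᵀ * Pstar * B) + γ • (Dᵀ * Pstar * D) with hSdef
  have hSpd : S.PosDef := by
    refine Matrix.PosDef.add_posSemidef
      (Matrix.PosDef.add_posSemidef hR (smulPSD hγ0 (transPSD hPstar.posSemidef B)))
      (smulPSD hγ0 (transPSD hPstar.posSemidef D))
  have hSdet : IsUnit S.det := (Matrix.isUnit_iff_isUnit_det S).mp hSpd.isUnit
  have h1 : S * S⁻¹ = 1 := Matrix.mul_nonsing_inv S hSdet
  have h2 : S⁻¹ * S = 1 := Matrix.nonsing_inv_mul S hSdet
  have hSt : Sᵀ = S := by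
    rw [← Matrix.conjTranspose_eq_transpose_of_trivial]; exact hSpd.1
  have hSinvT : (S⁻¹)ᵀ = S⁻¹ := by rw [Matrix.transpose_nonsing_inv, hSt]
  set F1 : Matrix (Fin n) (Fin n) ℝ := A + B * L i with hF1
  set F2 : Matrix (Fin n) (Fin n) ℝ := C + D * L i with hF2
  set Z : Matrix (Fin m) (Fin n) ℝ :=
    L i + S⁻¹ * (γ • (Bᵀ * Pstar * A) + γ • (Dᵀ * Pstar * C)) with hZ
  set Mm : Matrix (Fin n) (Fin n) ℝ := Zᵀ * S * Z with hMm
  have hMpsd : Mm.PosSemidef := transPSD hSpd.posSemidef Z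
  set W : Matrix (Fin n) (Fin n) ℝ := (L i)ᵀ * R * (L i) + Q with hW
  have hWpsd : W.PosSemidef := (transPSD hR.posSemidef (L i)).add hQ.posSemidef
  -- the two key matrix equations
  have hΔeq : P i - Pstar = γ • (F1ᵀ * (P i - Pstar) * F1) + γ • (F2ᵀ * (P i - Pstar) * F2)
      + Mm :=
    delta_eq A C Pstar (P i) Q B D R S (L i) γ hPstT hSdef hSinvT h1 h2 (hsle i) hsare
  have hPeq : P i = γ • (F1ᵀ * (P i) * F1) + γ • (F2ᵀ * (P i) * F2) + W := by
    nth_rewrite 1 [hsle i]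
    rw [hW, hF1, hF2]
    abel
  -- the linear map and its iterates
  set Tf : Matrix (Fin n) (Fin n) ℝ → Matrix (Fin n) (Fin n) ℝ :=
    fun X => γ • (F1ᵀ * X * F1) + γ • (F2ᵀ * X * F2) with hTf
  have hTf_psd : ∀ X : Matrix (Fin n) (Fin n) ℝ, X.PosSemidef → (Tf X).PosSemidef := by
    intro X hX
    exact (smulPSD hγ0 (transPSD hX F1)).add (smulPSD hγ0 (transPSD hX F2))
  have hTf_sub : ∀ X Y, Tf (X - Y) = Tf X - Tf Y := by
    intro X Y
    simp only [hTf, Matrix.mul_sub, Matrix.sub_mul, smul_sub]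
    abel
  have hTf_add : ∀ X Y, Tf (X + Y) = Tf X + Tf Y := by
    intro X Y
    simp only [hTf, Matrix.mul_add, Matrix.add_mul, smul_add]
    abel
  have hTf_smul : ∀ (c : ℝ) X, Tf (c • X) = c • Tf X := by
    intro c X
    simp only [hTf, Matrix.mul_smul, Matrix.smul_mul, smul_add, smul_smul, mul_comm]
  have hIt_psd : ∀ (k : ℕ) X, X.PosSemidef → (Tf^[k] X).PosSemidef := by
    intro k
    induction k with
    | zero => intro X hX; simpa using hX
    | succ k ih =>
      intro X hX
      rw [Function.iterate_succ_apply']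
      exact hTf_psd _ (ih X hX)
  have hIt_sub : ∀ (k : ℕ) X Y, Tf^[k] (X - Y) = Tf^[k] X - Tf^[k] Y := by
    intro k
    induction k with
    | zero => intro X Y; simp
    | succ k ih =>
      intro X Y
      simp only [Function.iterate_succ_apply', ih, hTf_sub]
  have hIt_add : ∀ (k : ℕ) X Y, Tf^[k] (X + Y) = Tf^[k] X + Tf^[k] Y := by
    intro k
    induction k with
    | zero => intro X Y; simp
    | succ k ih =>
      intro X Y
      simp only [Function.iterate_succ_apply', ih, hTf_add]
  have hIt_smul : ∀ (k : ℕ) (c : ℝ) X, Tf^[k] (c • X) = c • Tf^[k] X := by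
    intro k
    induction k with
    | zero => intro c X; simp
    | succ k ih =>
      intro c X
      simp only [Function.iterate_succ_apply', ih, hTf_smul]
  have hiter : ∀ (X N : Matrix (Fin n) (Fin n) ℝ), X - Tf X = N →
      ∀ k, X - Tf^[k] X = ∑ j ∈ Finset.range k, Tf^[j] N := by
    intro X N h k
    induction k with
    | zero => simp
    | succ k ih =>
      rw [Finset.sum_range_succ, ← ih, Function.iterate_succ_apply']
      have hN : Tf^[k] N = Tf^[k] X - Tf^[k] (Tf X) := by rw [← hIt_sub, h]
      rw [hN, ← Function.iterate_succ_apply, Function.iterate_succ_apply']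
      abel
  obtain ⟨c, hc0, hcb⟩ := dominate Q Pstar hQ hPstar.posSemidef
  -- hermitian part
  have hherm : (P i - Pstar).IsHermitian := (hPpd i).1.sub hPstar.1
  -- quadratic form helpers (for all vectors)
  have hq_sub' : ∀ (v : Fin n → ℝ) (X Y : Matrix (Fin n) (Fin n) ℝ),
      v ⬝ᵥ (X - Y) *ᵥ v = v ⬝ᵥ X *ᵥ v - v ⬝ᵥ Y *ᵥ v := by
    intro v X Y; rw [Matrix.sub_mulVec, dotProduct_sub]
  have hq_add' : ∀ (v : Fin n → ℝ) (X Y : Matrix (Fin n) (Fin n) ℝ),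
      v ⬝ᵥ (X + Y) *ᵥ v = v ⬝ᵥ X *ᵥ v + v ⬝ᵥ Y *ᵥ v := by
    intro v X Y; rw [Matrix.add_mulVec, dotProduct_add]
  have hq_smul' : ∀ (v : Fin n → ℝ) (a : ℝ) (X : Matrix (Fin n) (Fin n) ℝ),
      v ⬝ᵥ (a • X) *ᵥ v = a * (v ⬝ᵥ X *ᵥ v) := by
    intro v a X; rw [smul_mulVec, dotProduct_smul]; rfl
  have hq_nonneg' : ∀ (v : Fin n → ℝ) {N : Matrix (Fin n) (Fin n) ℝ},
      N.PosSemidef → 0 ≤ v ⬝ᵥ N *ᵥ v := by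
    intro v N hN
    have := hN.dotProduct_mulVec_nonneg v
    rwa [star_trivial] at this
  -- Δ + c•W is psd
  have hΔcW : (P i - Pstar + c • W).PosSemidef := by
    refine .of_dotProduct_mulVec_nonneg ?_ ?_
    · show (P i - Pstar + c • W)ᴴ = _
      rw [conjTranspose_add, conjTranspose_smul, star_trivial, hherm.eq, hWpsd.1.eq]
    · intro y
      rw [star_trivial, hq_add' y, hq_sub' y, hq_smul' y]
      have e1 : 0 ≤ y ⬝ᵥ (P i) *ᵥ y := hq_nonneg' y (hPpd i).posSemidef
      have e2 : y ⬝ᵥ Pstar *ᵥ y ≤ c * (y ⬝ᵥ Q *ᵥ y) := hcb y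
      have e3 : y ⬝ᵥ Q *ᵥ y ≤ y ⬝ᵥ W *ᵥ y := by
        rw [hW, hq_add' y]
        have := hq_nonneg' y (transPSD hR.posSemidef (L i))
        linarith
      have e4 : c * (y ⬝ᵥ Q *ᵥ y) ≤ c * (y ⬝ᵥ W *ᵥ y) := mul_le_mul_of_nonneg_left e3 hc0
      linarith
  refine .of_dotProduct_mulVec_nonneg hherm fun x => ?_
  rw [star_trivial]
  have hq_sum : ∀ (k : ℕ) (f : ℕ → Matrix (Fin n) (Fin n) ℝ),
      x ⬝ᵥ (∑ j ∈ Finset.range k, f j) *ᵥ x = ∑ j ∈ Finset.range k, x ⬝ᵥ (f j) *ᵥ x := by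
    intro k f
    induction k with
    | zero => simp
    | succ k ih => rw [Finset.sum_range_succ, Finset.sum_range_succ, hq_add' x, ih]
  by_contra hneg
  push_neg at hneg
  set ε : ℝ := -(x ⬝ᵥ (P i - Pstar) *ᵥ x) with hε
  have hεpos : 0 < ε := by rw [hε]; linarith
  -- the fixed-point equations in "defect" form
  have hΔdef : (P i - Pstar) - Tf (P i - Pstar) = Mm := by
    nth_rewrite 1 [hΔeq]
    simp only [hTf]
    abel
  have hPdef : P i - Tf (P i) = W := by
    nth_rewrite 1 [hPeq]
    simp only [hTf]
    abel
  -- x (Tf^[k] Δ) x ≤ x Δ x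
  have hMs : ∀ k, x ⬝ᵥ (Tf^[k] (P i - Pstar)) *ᵥ x ≤ x ⬝ᵥ (P i - Pstar) *ᵥ x := by
    intro k
    have h := hiter (P i - Pstar) Mm hΔdef k
    have hpsd : (∑ j ∈ Finset.range k, Tf^[j] Mm).PosSemidef :=
      psdSum _ _ (fun j _ => hIt_psd j _ hMpsd)
    have h0 := hq_nonneg' x hpsd
    rw [← h, hq_sub' x] at h0
    linarith
  -- ε ≤ c * x (Tf^[k] W) x
  have hbk : ∀ k, ε ≤ c * (x ⬝ᵥ (Tf^[k] W) *ᵥ x) := by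
    intro k
    have hpsd := hIt_psd k _ hΔcW
    rw [hIt_add, hIt_smul] at hpsd
    have h0 := hq_nonneg' x hpsd
    rw [hq_add' x, hq_smul' x] at h0
    have h1 := hMs k
    rw [hε]
    linarith
  have hb_nonneg : ∀ k, 0 ≤ x ⬝ᵥ (Tf^[k] W) *ᵥ x :=
    fun k => hq_nonneg' x (hIt_psd k _ hWpsd)
  have hcpos : 0 < c := by
    rcases hc0.lt_or_eq with h | h
    · exact h
    · exfalso
      have := hbk 0
      rw [← h] at this
      linarith
  -- partial sums are bounded by x (P i) x
  have hsum_le : ∀ k, ∑ j ∈ Finset.range k, x ⬝ᵥ (Tf^[j] W) *ᵥ x ≤ x ⬝ᵥ (P i) *ᵥ x := by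
    intro k
    have h := hiter (P i) W hPdef k
    have h0 := hq_nonneg' x (hIt_psd k _ (hPpd i).posSemidef)
    rw [← hq_sum, ← h, hq_sub' x]
    linarith
  have hlb : ∀ k : ℕ, (k : ℝ) * (ε / c) ≤ x ⬝ᵥ (P i) *ᵥ x := by
    intro k
    have hterm : ∀ j ∈ Finset.range k, ε / c ≤ x ⬝ᵥ (Tf^[j] W) *ᵥ x := by
      intro j _
      rw [div_le_iff₀ hcpos]
      have := hbk j
      linarith [mul_comm c (x ⬝ᵥ (Tf^[j] W) *ᵥ x)]
    calc (k : ℝ) * (ε / c) = ∑ _j ∈ Finset.range k, (ε / c) := by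
          rw [Finset.sum_const, Finset.card_range, nsmul_eq_mul]
      _ ≤ ∑ j ∈ Finset.range k, x ⬝ᵥ (Tf^[j] W) *ᵥ x := Finset.sum_le_sum hterm
      _ ≤ x ⬝ᵥ (P i) *ᵥ x := hsum_le k
  have hd : 0 < ε / c := div_pos hεpos hcpos
  obtain ⟨k, hk⟩ := exists_nat_gt ((x ⬝ᵥ (P i) *ᵥ x) / (ε / c))
  have hk2 : x ⬝ᵥ (P i) *ᵥ x < (k : ℝ) * (ε / c) := by
    rw [div_lt_iff₀ hd] at hk
    linarith
  linarith [hlb k]
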